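/- Every left ω-narrow feathered strongly topological gyrogroup is Lindelöf. -/

import Mathlib

universe u v

/-- A gyrogroup: a set with a binary operation `add`, a (unique) two-sided identity `zero`,
(unique) two-sided inverses `neg`, and gyroautomorphisms `gyr x y` satisfying the left
gyroassociative law and the left loop property. -/
class Gyrogroup (G : Type u) where
  add : G → G → G
  zero : G
  neg : G → G
  gyr : G → G → G → G
  zero_add : ∀ a : G, add zero a = a
  add_zero : ∀ a : G, add a zero = a
  zero_unique : ∀ z : G, (∀ a : G, add z a = a ∧ add a z = a) → z = zero
  neg_add : ∀ a : G, add (neg a) a = zero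
  add_neg : ∀ a : G, add a (neg a) = zero
  neg_unique : ∀ x y : G, add y x = zero → add x y = zero → y = neg x
  gyr_bijective : ∀ x y : G, Function.Bijective (gyr x y)
  gyr_add : ∀ x y a b : G, gyr x y (add a b) = add (gyr x y a) (gyr x y b)
  gyr_assoc : ∀ x y z : G, add x (add y z) = add (add x y) (gyr x y z)
  gyr_left_loop : ∀ x y : G, gyr (add x y) y = gyr x y

/-- A topological gyrogroup: a gyrogroup with a Hausdorff topology making the operation
jointly continuous and the inversion continuous. -/
def IsTopologicalGyrogroup (G : Type u) [TopologicalSpace G] [Gyrogroup G] : Prop :=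
  T2Space G ∧ Continuous (fun p : G × G => Gyrogroup.add p.1 p.2) ∧
    Continuous (Gyrogroup.neg : G → G)

/-- A strongly topological gyrogroup: a topological gyrogroup admitting a neighborhood
base `𝒰` at `0` each member of which is invariant under all gyrations. -/
def IsStronglyTopologicalGyrogroup (G : Type u) [TopologicalSpace G] [Gyrogroup G] : Prop :=
  IsTopologicalGyrogroup G ∧
    ∃ 𝒰 : Set (Set G),
      (∀ U ∈ 𝒰, U ∈ nhds (Gyrogroup.zero : G)) ∧
      (∀ V ∈ nhds (Gyrogroup.zero : G), ∃ U ∈ 𝒰, U ⊆ V) ∧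
      (∀ U ∈ 𝒰, ∀ x y : G, Gyrogroup.gyr x y '' U = U)

/-- Left ω-narrow: every open neighborhood `V` of `0` satisfies `G = A ⊕ V`
for some countable `A`. -/
def LeftOmegaNarrow (G : Type u) [TopologicalSpace G] [Gyrogroup G] : Prop :=
  ∀ V : Set G, IsOpen V → (Gyrogroup.zero : G) ∈ V →
    ∃ A : Set G, A.Countable ∧ Set.image2 Gyrogroup.add A V = Set.univ

/-- Right ω-narrow: every open neighborhood `V` of `0` satisfies `G = V ⊕ A`
for some countable `A`. -/
def RightOmegaNarrow (G : Type u) [TopologicalSpace G] [Gyrogroup G] : Prop :=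
  ∀ V : Set G, IsOpen V → (Gyrogroup.zero : G) ∈ V →
    ∃ A : Set G, A.Countable ∧ Set.image2 Gyrogroup.add V A = Set.univ

/-- ω-narrow: both left and right ω-narrow. -/
def OmegaNarrow (G : Type u) [TopologicalSpace G] [Gyrogroup G] : Prop :=
  LeftOmegaNarrow G ∧ RightOmegaNarrow G

/-- A subgyrogroup: a nonempty subset forming a gyrogroup under the inherited operation,
the restriction of each `gyr a b` (for `a b ∈ H`) being an automorphism of `H`. -/
structure IsSubgyrogroup (G : Type u) [Gyrogroup G] (H : Set G) : Prop where
  nonempty : H.Nonempty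
  zero_mem : (Gyrogroup.zero : G) ∈ H
  add_mem : ∀ a ∈ H, ∀ b ∈ H, Gyrogroup.add a b ∈ H
  neg_mem : ∀ a ∈ H, Gyrogroup.neg a ∈ H
  gyr_image : ∀ a ∈ H, ∀ b ∈ H, Gyrogroup.gyr a b '' H = H

/-- An L-subgyrogroup: a subgyrogroup with `gyr a h (H) = H` for all `a ∈ G`, `h ∈ H`. -/
structure IsLSubgyrogroup (G : Type u) [Gyrogroup G] (H : Set G)
    extends IsSubgyrogroup G H : Prop where
  gyr_image_L : ∀ a : G, ∀ h ∈ H, Gyrogroup.gyr a h '' H = H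

/-- The left coset `a ⊕ H`. -/
def lcoset {G : Type u} [Gyrogroup G] (a : G) (H : Set G) : Set G :=
  (fun h => Gyrogroup.add a h) '' H

/-- The equivalence relation identifying points with the same left coset of `H`;
for an L-subgyrogroup the cosets partition `G` and the quotient is the coset space `G/H`,
which carries the quotient topology. -/
def cosetSetoid {G : Type u} [Gyrogroup G] (H : Set G) : Setoid G :=
  ⟨fun a b => lcoset a H = lcoset b H, ⟨fun _ => rfl, Eq.symm, Eq.trans⟩⟩

/-- A topological space is feathered if it contains a nonempty compact subset of
countable character. -/
def Feathered (X : Type u) [TopologicalSpace X] : Prop :=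
  ∃ K : Set X, K.Nonempty ∧ IsCompact K ∧
    ∃ 𝒞 : Set (Set X), 𝒞.Countable ∧
      (∀ U ∈ 𝒞, IsOpen U ∧ K ⊆ U) ∧
      (∀ W : Set X, IsOpen W → K ⊆ W → ∃ U ∈ 𝒞, U ⊆ W)


namespace GyroAux
variable {G : Type u} [Gyrogroup G]

lemma left_cancel {a b c : G} (h : Gyrogroup.add a b = Gyrogroup.add a c) : b = c := by
  have hb : Gyrogroup.add (Gyrogroup.neg a) (Gyrogroup.add a b) = Gyrogroup.gyr (Gyrogroup.neg a) a b := by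
    rw [Gyrogroup.gyr_assoc, Gyrogroup.neg_add, Gyrogroup.zero_add]
  have hc : Gyrogroup.add (Gyrogroup.neg a) (Gyrogroup.add a c) = Gyrogroup.gyr (Gyrogroup.neg a) a c := by
    rw [Gyrogroup.gyr_assoc, Gyrogroup.neg_add, Gyrogroup.zero_add]
  exact (Gyrogroup.gyr_bijective (Gyrogroup.neg a) a).1 (by rw [← hb, ← hc, h])

lemma gyr_zero_left (a z : G) : Gyrogroup.gyr Gyrogroup.zero a z = z := by
  apply left_cancel (a := a)
  have h := Gyrogroup.gyr_assoc (Gyrogroup.zero : G) a z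
  rw [Gyrogroup.zero_add, Gyrogroup.zero_add] at h
  exact h.symm

lemma gyr_neg_left (a z : G) : Gyrogroup.gyr (Gyrogroup.neg a) a z = z := by
  have h := Gyrogroup.gyr_left_loop (Gyrogroup.neg a) a
  rw [Gyrogroup.neg_add] at h
  rw [← h]
  exact gyr_zero_left a z

lemma gyr_neg_right (a z : G) : Gyrogroup.gyr a (Gyrogroup.neg a) z = z := by
  have h := Gyrogroup.gyr_left_loop a (Gyrogroup.neg a)
  rw [Gyrogroup.add_neg] at h
  rw [← h]
  exact gyr_zero_left (Gyrogroup.neg a) z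

lemma cancel₁ (a b : G) : Gyrogroup.add (Gyrogroup.neg a) (Gyrogroup.add a b) = b := by
  rw [Gyrogroup.gyr_assoc, Gyrogroup.neg_add, Gyrogroup.zero_add, gyr_neg_left]

lemma cancel₂ (a b : G) : Gyrogroup.add a (Gyrogroup.add (Gyrogroup.neg a) b) = b := by
  rw [Gyrogroup.gyr_assoc, Gyrogroup.add_neg, Gyrogroup.zero_add, gyr_neg_right]

lemma neg_zero' : (Gyrogroup.neg (Gyrogroup.zero : G)) = Gyrogroup.zero :=
  (Gyrogroup.neg_unique Gyrogroup.zero Gyrogroup.zero (Gyrogroup.zero_add Gyrogroup.zero) (Gyrogroup.zero_add Gyrogroup.zero)).symm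

lemma neg_neg' (a : G) : Gyrogroup.neg (Gyrogroup.neg a) = a :=
  (Gyrogroup.neg_unique (Gyrogroup.neg a) a (Gyrogroup.add_neg a) (Gyrogroup.neg_add a)).symm

lemma image_add_eq_preimage (x : G) (S : Set G) :
    (fun z => Gyrogroup.add x z) '' S = (fun z => Gyrogroup.add (Gyrogroup.neg x) z) ⁻¹' S := by
  ext w
  simp only [Set.mem_image, Set.mem_preimage]
  constructor
  · rintro ⟨s, hs, rfl⟩
    rwa [cancel₁]
  · intro hw
    exact ⟨Gyrogroup.add (Gyrogroup.neg x) w, hw, cancel₂ x w⟩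

end GyroAux


/-- Every left ω-narrow feathered strongly topological gyrogroup is
Lindelöf. -/
theorem lindelof_of_leftOmegaNarrow_feathered {G : Type u}
    [TopologicalSpace G] [Gyrogroup G]
    (hG : IsStronglyTopologicalGyrogroup G)
    (hnarrow : LeftOmegaNarrow G) (hfeathered : Feathered G) :
    LindelofSpace G := by
  classical
  obtain ⟨⟨_, hadd, hneg⟩, 𝒰, h𝒰nhds, h𝒰base, h𝒰gyr⟩ := hG
  have contL : ∀ x : G, Continuous (fun z : G => Gyrogroup.add x z) := fun x =>
    hadd.comp (continuous_const.prodMk continuous_id)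
  have openL : ∀ (x : G) (S : Set G), IsOpen S →
      IsOpen ((fun z => Gyrogroup.add x z) '' S) := by
    intro x S hS
    rw [GyroAux.image_add_eq_preimage]
    exact hS.preimage (contL _)
  -- translate the feathered data so that 0 ∈ K
  obtain ⟨K0, ⟨k₀, hk₀⟩, hK0c, 𝒞0, h𝒞0count, h𝒞0mem, h𝒞0base⟩ := hfeathered
  set T : G → G := fun z => Gyrogroup.add (Gyrogroup.neg k₀) z with hT
  have hTcont : Continuous T := contL _
  set K : Set G := T '' K0 with hKdef
  set 𝒞 : Set (Set G) := (Set.image T) '' 𝒞0 with h𝒞def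
  have hKc : IsCompact K := hK0c.image hTcont
  have h0K : (Gyrogroup.zero : G) ∈ K := ⟨k₀, hk₀, Gyrogroup.neg_add k₀⟩
  have h𝒞count : 𝒞.Countable := h𝒞0count.image _
  have h𝒞open : ∀ C ∈ 𝒞, IsOpen C ∧ K ⊆ C := by
    rintro _ ⟨C0, hC0, rfl⟩
    exact ⟨openL _ _ (h𝒞0mem C0 hC0).1, Set.image_mono (h𝒞0mem C0 hC0).2⟩
  have h𝒞base : ∀ W : Set G, IsOpen W → K ⊆ W → ∃ C ∈ 𝒞, C ⊆ W := by
    intro W hWo hKW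
    have hK0sub : K0 ⊆ T ⁻¹' W := fun z hz => hKW ⟨z, hz, rfl⟩
    obtain ⟨C0, hC0, hC0sub⟩ := h𝒞0base (T ⁻¹' W) (hWo.preimage hTcont) hK0sub
    refine ⟨T '' C0, ⟨C0, hC0, rfl⟩, ?_⟩
    rintro w ⟨z, hz, rfl⟩
    exact hC0sub hz
  -- for each member C of the base, produce P (gyration-invariant), V (open symmetric,
  -- V ⊕ V ⊆ P) and a countable A with A ⊕ V = G
  have key : ∀ C : Set G, ∃ P V A : Set G, C ∈ 𝒞 →
      P ⊆ C ∧ (∀ x y : G, Gyrogroup.gyr x y '' P = P) ∧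
      IsOpen V ∧ (Gyrogroup.zero : G) ∈ V ∧
      (∀ v ∈ V, Gyrogroup.neg v ∈ V) ∧
      (∀ v ∈ V, ∀ u ∈ V, Gyrogroup.add v u ∈ P) ∧
      A.Countable ∧ Set.image2 Gyrogroup.add A V = Set.univ := by
    intro C
    by_cases hC : C ∈ 𝒞
    · have h0C : (Gyrogroup.zero : G) ∈ C := (h𝒞open C hC).2 h0K
      have hCn : C ∈ nhds (Gyrogroup.zero : G) := (h𝒞open C hC).1.mem_nhds h0C
      obtain ⟨P, hP𝒰, hPC⟩ := h𝒰base C hCn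
      have hPn : P ∈ nhds (Gyrogroup.zero : G) := h𝒰nhds P hP𝒰
      have hpre : (fun p : G × G => Gyrogroup.add p.1 p.2) ⁻¹' P ∈
          nhds ((Gyrogroup.zero : G), (Gyrogroup.zero : G)) := by
        refine hadd.continuousAt.preimage_mem_nhds ?_
        rwa [show Gyrogroup.add (Gyrogroup.zero : G) Gyrogroup.zero = Gyrogroup.zero from
          Gyrogroup.zero_add _]
      obtain ⟨u, v, huo, hu0, hvo, hv0, huv⟩ := mem_nhds_prod_iff'.mp hpre
      set W : Set G := u ∩ v with hWdef
      set V : Set G := W ∩ Gyrogroup.neg ⁻¹' W with hVdef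
      have hWo : IsOpen W := huo.inter hvo
      have hVo : IsOpen V := hWo.inter (hWo.preimage hneg)
      have hV0 : (Gyrogroup.zero : G) ∈ V := by
        refine ⟨⟨hu0, hv0⟩, ?_⟩
        rw [Set.mem_preimage, GyroAux.neg_zero']
        exact ⟨hu0, hv0⟩
      have hVsym : ∀ w ∈ V, Gyrogroup.neg w ∈ V := by
        intro w hw
        refine ⟨hw.2, ?_⟩
        rw [Set.mem_preimage, GyroAux.neg_neg']
        exact hw.1
      have hVmul : ∀ a ∈ V, ∀ b ∈ V, Gyrogroup.add a b ∈ P := by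
        intro a ha b hb
        exact huv (Set.mk_mem_prod ha.1.1 hb.1.2)
      obtain ⟨A, hAc, hAcov⟩ := hnarrow V hVo hV0
      exact ⟨P, V, A, fun _ => ⟨hPC, h𝒰gyr P hP𝒰, hVo, hV0, hVsym, hVmul, hAc, hAcov⟩⟩
    · exact ⟨∅, ∅, ∅, fun h => absurd h hC⟩
  choose P V A hkey using key
  -- the Lindelöf property via countable subcovers
  refine ⟨isLindelof_of_countable_subcover ?_⟩
  intro ι Ucv hUo hcov
  -- Step A: each translate x ⊕ K is covered by finitely many Ucv i, and some C ∈ 𝒞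
  -- is pushed inside that finite union
  have stepA : ∀ x : G, ∃ C : Set G, C ∈ 𝒞 ∧ ∃ t : Finset ι,
      (fun z => Gyrogroup.add x z) '' C ⊆ ⋃ i ∈ t, Ucv i := by
    intro x
    have hxKc : IsCompact ((fun z => Gyrogroup.add x z) '' K) := hKc.image (contL x)
    obtain ⟨t, ht⟩ := hxKc.elim_finite_subcover Ucv hUo
      (fun z _ => hcov (Set.mem_univ z))
    have hSo : IsOpen ((fun z => Gyrogroup.add x z) ⁻¹' (⋃ i ∈ t, Ucv i)) :=
      (isOpen_biUnion fun i _ => hUo i).preimage (contL x)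
    have hKS : K ⊆ (fun z => Gyrogroup.add x z) ⁻¹' (⋃ i ∈ t, Ucv i) := fun k hk =>
      ht ⟨k, hk, rfl⟩
    obtain ⟨C, hC, hCsub⟩ := h𝒞base _ hSo hKS
    refine ⟨C, hC, t, ?_⟩
    rintro w ⟨z, hz, rfl⟩
    exact hCsub hz
  choose Cx hCx𝒞 tx htx using stepA
  -- the selection of a witness x for each pair (C, a)
  let pred : Set G → G → Prop := fun C a =>
    ∃ x : G, Cx x = C ∧ ∃ w ∈ V C, Gyrogroup.add a w = x
  let xsel : Set G → G → Finset ι := fun C a =>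
    if h : pred C a then tx h.choose else ∅
  refine ⟨⋃ C ∈ 𝒞, ⋃ a ∈ A C, (xsel C a : Set ι), ?_, ?_⟩
  · exact Set.Countable.biUnion h𝒞count fun C hC =>
      Set.Countable.biUnion ((hkey C hC).2.2.2.2.2.2.1) fun a _ =>
        (xsel C a).countable_toSet
  · intro y _
    have hC : Cx y ∈ 𝒞 := hCx𝒞 y
    obtain ⟨hPC, hPgyr, hVo, hV0, hVsym, hVmul, hAc, hAcov⟩ := hkey (Cx y) hC
    have hy : y ∈ Set.image2 Gyrogroup.add (A (Cx y)) (V (Cx y)) := by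
      rw [hAcov]; exact Set.mem_univ y
    obtain ⟨a, ha, v, hv, hav⟩ := hy
    have hex : pred (Cx y) a := ⟨y, rfl, v, hv, hav⟩
    set x : G := hex.choose with hxdef
    obtain ⟨hxC, w, hw, hwx⟩ := hex.choose_spec
    rw [← hxdef] at hxC hwx
    -- y = x ⊕ p with p ∈ Cx x
    have hp : Gyrogroup.gyr a w (Gyrogroup.add (Gyrogroup.neg w) v) ∈ P (Cx y) := by
      have h1 : Gyrogroup.add (Gyrogroup.neg w) v ∈ P (Cx y) :=
        hVmul _ (hVsym w hw) v hv
      have h2 := hPgyr a w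
      rw [← h2]
      exact Set.mem_image_of_mem _ h1
    have hyx : Gyrogroup.add x (Gyrogroup.gyr a w (Gyrogroup.add (Gyrogroup.neg w) v)) = y := by
      rw [← hwx, ← Gyrogroup.gyr_assoc, GyroAux.cancel₂, hav]
    have hyin : y ∈ ⋃ i ∈ tx x, Ucv i := by
      refine htx x ?_
      refine ⟨Gyrogroup.gyr a w (Gyrogroup.add (Gyrogroup.neg w) v), ?_, hyx⟩
      rw [hxC]
      exact hPC hp
    obtain ⟨i, hi, hyi⟩ := Set.mem_iUnion₂.mp hyin
    have hixsel : i ∈ xsel (Cx y) a := by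
      have : xsel (Cx y) a = tx hex.choose := dif_pos hex
      rw [this]
      exact hi
    have his : i ∈ ⋃ C ∈ 𝒞, ⋃ a ∈ A C, (xsel C a : Set ι) :=
      Set.mem_biUnion hC (Set.mem_biUnion ha (Finset.mem_coe.mpr hixsel))
    exact Set.mem_biUnion his hyi
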